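/- Let P : ℝ² → ℝ be continuous, let r, a : ℝ → ℝ be differentiable with r(t) > 0 and a(t) > 0 for all t, let ω : ℝ → ℝ be differentiable with r(t) ω'(t) = 1, and let Q(t) be the 3×3 matrix with rows (cos ω(t), 0, −sin ω(t)), (0, 1, 0), (sin ω(t), 0, cos ω(t)). Define X(u,t) := r(t) Q(t) X̂(u) (circular curves of radius r(t) in a rotating plane), ρ(u,t) := a(t) cos 2πu, N(u,t) := −Q(t) X̂(u), B(u,t) := Q(t) e₃, κ(t) := 1/r(t), β(t) := −P(r(t), a(t)), γ(u) := cos 2πu and q(u) := cos 2πu. Then the pair (X, ρ) satisfies the coupled system ∂_t X(u,t) = β(t) N(u,t) + γ(u) B(u,t) and ∂_t ρ(u,t) − κ(t) β(t) ρ(u,t) = (2π r(t))^{−2} ∂_u² ρ(u,t) + q(u) for all (u,t) if and only if (r, a) solves the planar ODE system r'(t) = P(r(t), a(t)) and a'(t) = −(a(t)/r(t)) P(r(t), a(t)) − a(t)/r(t)² + 1 for all t. -/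

import Mathlib

open Real Matrix Function

noncomputable def toE3 (v : Fin 3 → ℝ) : EuclideanSpace ℝ (Fin 3) :=
  (WithLp.equiv 2 (Fin 3 → ℝ)).symm v

noncomputable def rcE3 : EuclideanSpace ℝ (Fin 3) ≃L[ℝ] (Fin 3 → ℝ) :=
  PiLp.continuousLinearEquiv 2 ℝ _

lemma rc_transfer {f : ℝ → EuclideanSpace ℝ (Fin 3)} {v : Fin 3 → ℝ} {t : ℝ} :
    HasDerivAt f (toE3 v) t ↔ HasDerivAt (fun s => rcE3 (f s)) v t := by
  constructor
  · intro h
    exact (rcE3.toContinuousLinearMap.hasFDerivAt).comp_hasDerivAt t h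
  · intro h
    have := (rcE3.symm.toContinuousLinearMap.hasFDerivAt).comp_hasDerivAt t h
    simpa [Function.comp_def, rcE3, toE3] using this

lemma rc_hasDerivAt_cos2pi (c u : ℝ) :
    HasDerivAt (fun w => c * Real.cos (2*π*w)) (-(c * (2*π)) * Real.sin (2*π*u)) u := by
  have h : HasDerivAt (fun w : ℝ => 2*π*w) (2*π) u := by
    simpa using (hasDerivAt_id u).const_mul (2*π)
  have := (h.cos).const_mul c
  exact this.congr_deriv (by ring)

lemma rc_secondDeriv (c u : ℝ) :
    deriv (deriv (fun w => c * Real.cos (2*π*w))) u = -(c * (2*π)^2) * Real.cos (2*π*u) := by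
  have h1 : deriv (fun w => c * Real.cos (2*π*w)) = fun w => -(c * (2*π)) * Real.sin (2*π*w) :=
    funext fun w => (rc_hasDerivAt_cos2pi c w).deriv
  rw [h1]
  have h : HasDerivAt (fun w : ℝ => 2*π*w) (2*π) u := by
    simpa using (hasDerivAt_id u).const_mul (2*π)
  have h2 := (h.sin).const_mul (-(c * (2*π)))
  rw [h2.deriv]; ring

/-- The pair `(X, ρ)` of circles `X(u,t) = r(t) Q(t) X̂(u)` in rotating planes and scalar
quantity `ρ(u,t) = a(t) cos 2πu` solves the coupled system `∂_t X = β N + γ B`,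
`∂_t ρ − κ β ρ = (2πr)⁻² ∂_u² ρ + q` (with `β = −P(r,a)`, `γ = q = cos 2πu`, `κ = 1/r`,
`N = −Q X̂`, `B = Q e₃`) iff `(r, a)` solves the planar ODE system
`r' = P(r,a)`, `a' = −(a/r) P(r,a) − a/r² + 1`. -/
theorem rotating_circles_coupled_system_iff_ODE
    (P : ℝ → ℝ → ℝ) (hP : Continuous (uncurry P))
    (r a ω : ℝ → ℝ)
    (hr : Differentiable ℝ r) (ha : Differentiable ℝ a)
    (hrpos : ∀ t, 0 < r t) (hapos : ∀ t, 0 < a t)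
    (hω : Differentiable ℝ ω) (hrω : ∀ t, r t * deriv ω t = 1)
    (Q : ℝ → Matrix (Fin 3) (Fin 3) ℝ)
    (hQ : ∀ t, Q t = !![Real.cos (ω t), 0, -Real.sin (ω t);
                        0, 1, 0;
                        Real.sin (ω t), 0, Real.cos (ω t)])
    (X : ℝ → ℝ → EuclideanSpace ℝ (Fin 3))
    (hX : ∀ u t, X u t = r t • toE3 ((Q t).mulVec ![Real.cos (2*π*u), Real.sin (2*π*u), 0]))
    (ρ : ℝ → ℝ → ℝ)
    (hρ : ∀ u t, ρ u t = a t * Real.cos (2*π*u)) :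
    ((∀ u t : ℝ, HasDerivAt (fun s => X u s)
        ((-P (r t) (a t)) • (-(toE3 ((Q t).mulVec ![Real.cos (2*π*u), Real.sin (2*π*u), 0])))
          + Real.cos (2*π*u) • toE3 ((Q t).mulVec ![0, 0, 1])) t)
      ∧ (∀ u t : ℝ, HasDerivAt (fun s => ρ u s)
          ((r t)⁻¹ * (-P (r t) (a t)) * ρ u t
            + ((2*π*r t)^2)⁻¹ * deriv (deriv (fun w => ρ w t)) u
            + Real.cos (2*π*u)) t))
    ↔
    (∀ t : ℝ, deriv r t = P (r t) (a t)
      ∧ deriv a t = -(a t / r t) * P (r t) (a t) - a t / (r t)^2 + 1) := by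
  -- components of e3 ∘ X
  have hXc : ∀ u s, rcE3 (X u s) =
      ![r s * (Real.cos (ω s) * Real.cos (2*π*u)), r s * Real.sin (2*π*u),
        r s * (Real.sin (ω s) * Real.cos (2*π*u))] := by
    intro u s
    rw [hX, hQ]
    funext i
    fin_cases i <;>
      simp [rcE3, toE3, Matrix.mulVec, dotProduct, Fin.sum_univ_three] <;>
      first
        | exact Or.inl (by ring)
        | ring1
  -- actual time derivative of X
  have hD : ∀ u t, HasDerivAt (fun s => rcE3 (X u s))
      ![(deriv r t * Real.cos (ω t) - Real.sin (ω t)) * Real.cos (2*π*u),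
        deriv r t * Real.sin (2*π*u),
        (deriv r t * Real.sin (ω t) + Real.cos (ω t)) * Real.cos (2*π*u)] t := by
    intro u t
    rw [show (fun s => rcE3 (X u s)) = fun s =>
        ![r s * (Real.cos (ω s) * Real.cos (2*π*u)), r s * Real.sin (2*π*u),
          r s * (Real.sin (ω s) * Real.cos (2*π*u))] from funext fun s => hXc u s]
    apply hasDerivAt_pi.2
    intro i
    fin_cases i
    · have h1 := (hr t).hasDerivAt.mul
        ((((hω t).hasDerivAt).cos).mul_const (Real.cos (2*π*u)))
      have h2 : HasDerivAt (fun s => r s * (Real.cos (ω s) * Real.cos (2*π*u)))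
          ((deriv r t * Real.cos (ω t) - Real.sin (ω t)) * Real.cos (2*π*u)) t := by
        exact h1.congr_deriv (by linear_combination -(Real.sin (ω t) * Real.cos (2*π*u)) * hrω t)
      exact h2
    · simpa using (hr t).hasDerivAt.mul_const (Real.sin (2*π*u))
    · have h1 := (hr t).hasDerivAt.mul
        ((((hω t).hasDerivAt).sin).mul_const (Real.cos (2*π*u)))
      have h2 : HasDerivAt (fun s => r s * (Real.sin (ω s) * Real.cos (2*π*u)))
          ((deriv r t * Real.sin (ω t) + Real.cos (ω t)) * Real.cos (2*π*u)) t := by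
        exact h1.congr_deriv (by linear_combination -(-(Real.cos (ω t)) * Real.cos (2*π*u)) * hrω t)
      exact h2
  -- the claimed velocity vector, componentwise
  have hWc : ∀ u t, ((-P (r t) (a t)) • (-(toE3 ((Q t).mulVec ![Real.cos (2*π*u), Real.sin (2*π*u), 0])))
        + Real.cos (2*π*u) • toE3 ((Q t).mulVec ![0, 0, 1]))
      = toE3 ![(P (r t) (a t) * Real.cos (ω t) - Real.sin (ω t)) * Real.cos (2*π*u),
               P (r t) (a t) * Real.sin (2*π*u),
               (P (r t) (a t) * Real.sin (ω t) + Real.cos (ω t)) * Real.cos (2*π*u)] := by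
    intro u t
    rw [hQ]
    ext i
    fin_cases i <;>
      simp [toE3, Matrix.mulVec, dotProduct, Fin.sum_univ_three] <;>
      first
        | exact Or.inl (by ring)
        | ring1
  have hρD : ∀ u t, HasDerivAt (fun s => ρ u s) (deriv a t * Real.cos (2*π*u)) t := by
    intro u t; simp only [hρ]; exact (ha t).hasDerivAt.mul_const _
  have hρ2 : ∀ u t, deriv (deriv (fun w => ρ w t)) u = -(a t * (2*π)^2) * Real.cos (2*π*u) := by
    intro u t; simp only [hρ]; exact rc_secondDeriv _ _
  constructor
  · rintro ⟨h1, h2⟩ t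
    constructor
    · have h := h1 (1/4) t
      rw [hWc, rc_transfer] at h
      have heq := h.unique (hD (1/4) t)
      have hc := congrFun heq 1
      simp only [Matrix.cons_val_one, Matrix.head_cons] at hc
      rw [show 2*π*(1/4 : ℝ) = π/2 by ring, Real.sin_pi_div_two, mul_one, mul_one] at hc
      exact hc.symm
    · have h := h2 0 t
      have heq := (hρD 0 t).unique h
      rw [hρ2, hρ 0 t] at heq
      simp only [mul_zero, Real.cos_zero, mul_one] at heq
      rw [heq]
      have hr0 := (hrpos t).ne'
      have hπ := Real.pi_ne_zero
      field_simp
      ring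
  · intro hODE
    constructor
    · intro u t
      rw [hWc, rc_transfer, ← (hODE t).1]
      exact hD u t
    · intro u t
      have h2 := (hODE t).2
      have : (r t)⁻¹ * (-P (r t) (a t)) * ρ u t
            + ((2*π*r t)^2)⁻¹ * deriv (deriv (fun w => ρ w t)) u
            + Real.cos (2*π*u) = deriv a t * Real.cos (2*π*u) := by
        rw [hρ2, hρ u t, h2]
        have hr0 := (hrpos t).ne'
        have hπ := Real.pi_ne_zero
        field_simp
        ring
      rw [this]
      exact hρD u t
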